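/- arXiv:2605.27961 — 3 statements merged into one kernel-verified Lean document; each statement's English description precedes it below -/
import Mathlib

section
/- Let B be the Banach space of power series f(T) = Σ a_n T^n with ‖f‖ = Σ |a_n| r^n < ∞ for a fixed real r with 0 < r < 1. For polynomials in an auxiliary variable U with coefficients in B, if Σ_{i=0}^{n+1} b_i U^i = (T - U) · Σ_{i=0}^{n} c_i U^i in B[U], then Σ_{i=0}^{n} ‖c_i‖ ≤ (1/(1-r)) · Σ_{k=0}^{n+1} ‖b_k‖. -/
/-- For `B = ℂ{T/r}` (a normed commutative ring with a distinguished
element `T` of norm `r`, `0 < r < 1`), if `Σ_{i=0}^{n+1} b_i U^i = (T - U) · Σ_{i=0}^n c_i U^i`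
in `B[U]`, then `Σ_{i=0}^n ‖c_i‖ ≤ (1/(1-r)) · Σ_{k=0}^{n+1} ‖b_k‖`. -/
theorem stmt0 {B : Type*} [NormedCommRing B] (r : ℝ) (hr0 : 0 < r) (hr1 : r < 1)
    (T : B) (hT : ‖T‖ = r) (n : ℕ) (p q : Polynomial B)
    (hp : p.natDegree ≤ n + 1) (hq : q.natDegree ≤ n)
    (heq : p = (Polynomial.C T - Polynomial.X) * q) :
    ∑ i ∈ Finset.range (n + 1), ‖q.coeff i‖ ≤
      (1 / (1 - r)) * ∑ k ∈ Finset.range (n + 2), ‖p.coeff k‖ := by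
  set S := ∑ i ∈ Finset.range (n + 1), ‖q.coeff i‖ with hS
  set P := ∑ k ∈ Finset.range (n + 2), ‖p.coeff k‖ with hP
  have hqtop : q.coeff (n + 1) = 0 :=
    Polynomial.coeff_eq_zero_of_natDegree_lt (lt_of_le_of_lt hq (Nat.lt_succ_self n))
  have hrec : ∀ j : ℕ, q.coeff j = T * q.coeff (j + 1) - p.coeff (j + 1) := by
    intro j
    have := congrArg (fun f => Polynomial.coeff f (j + 1)) heq
    simp only [sub_mul, Polynomial.coeff_sub, Polynomial.coeff_C_mul,
      Polynomial.coeff_X_mul] at this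
    rw [this]; ring
  have key : ∀ j : ℕ, ‖q.coeff j‖ ≤ ‖p.coeff (j + 1)‖ + r * ‖q.coeff (j + 1)‖ := by
    intro j
    calc ‖q.coeff j‖ = ‖T * q.coeff (j + 1) - p.coeff (j + 1)‖ := by rw [hrec j]
      _ ≤ ‖T * q.coeff (j + 1)‖ + ‖p.coeff (j + 1)‖ := norm_sub_le _ _
      _ ≤ ‖T‖ * ‖q.coeff (j + 1)‖ + ‖p.coeff (j + 1)‖ := by
          gcongr; exact norm_mul_le _ _
      _ = ‖p.coeff (j + 1)‖ + r * ‖q.coeff (j + 1)‖ := by rw [hT]; ring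
  have hsum : S ≤ (∑ j ∈ Finset.range (n + 1), ‖p.coeff (j + 1)‖) +
      r * ∑ j ∈ Finset.range (n + 1), ‖q.coeff (j + 1)‖ := by
    rw [Finset.mul_sum, ← Finset.sum_add_distrib]
    exact Finset.sum_le_sum fun j _ => key j
  have hqshift : ∑ j ∈ Finset.range (n + 1), ‖q.coeff (j + 1)‖ ≤ S := by
    rw [Finset.sum_range_succ, hqtop, norm_zero, add_zero, hS,
      Finset.sum_range_succ' (fun i => ‖q.coeff i‖)]
    have : (0:ℝ) ≤ ‖q.coeff 0‖ := norm_nonneg _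
    linarith
  have hpshift : ∑ j ∈ Finset.range (n + 1), ‖p.coeff (j + 1)‖ ≤ P := by
    rw [hP, Finset.sum_range_succ' (fun k => ‖p.coeff k‖)]
    have : (0:ℝ) ≤ ‖p.coeff 0‖ := norm_nonneg _
    linarith
  have hqnn : 0 ≤ S := Finset.sum_nonneg fun _ _ => norm_nonneg _
  have h1 : S ≤ P + r * S := by nlinarith
  rw [one_div, inv_mul_eq_div, le_div_iff₀ (by linarith)]
  nlinarith
end

section
/- The relation A ≤ A' defined on idempotent commutative algebra objects by 'there exists a map A' → A commuting with the unit maps' is a partial order (after identifying isomorphic idempotent algebras): it is reflexive, transitive, and antisymmetric, and any map A' → A commuting with units is unique. -/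
open CategoryTheory MonoidalCategory

/-- An idempotent (commutative) algebra object: an object `A` with a unit
`e : 𝟙_C ⟶ A` such that `A ≃ 𝟙_C ⊗ A → A ⊗ A` (via `e ▷ A`) is an isomorphism. -/
structure IdemAlg (C : Type*) [Category C] [MonoidalCategory C] where
  obj : C
  unit : 𝟙_ C ⟶ obj
  idem : IsIso ((λ_ obj).inv ≫ (unit ▷ obj))

/-- The order relation: `A ≤ A'` iff there is a unit-compatible map `A' ⟶ A`. -/
def IdemAlg.le {C : Type*} [Category C] [MonoidalCategory C]
    (A A' : IdemAlg C) : Prop :=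
  ∃ f : A'.obj ⟶ A.obj, A'.unit ≫ f = A.unit

lemma IdemAlg.key {C : Type*} [Category C] [MonoidalCategory C]
    {A A' : IdemAlg C} (f h : A'.obj ⟶ A.obj)
    (hh : A'.unit ≫ h = A.unit) :
    f ≫ ((λ_ A.obj).inv ≫ (A.unit ▷ A.obj)) =
      ((λ_ A'.obj).inv ≫ (A'.unit ▷ A'.obj)) ≫ (h ▷ A'.obj) ≫ (A.obj ◁ f) := by
  rw [← hh]
  calc f ≫ (λ_ A.obj).inv ≫ ((A'.unit ≫ h) ▷ A.obj)
      = (λ_ A'.obj).inv ≫ (𝟙_ C ◁ f) ≫ ((A'.unit ≫ h) ▷ A.obj) := by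
        rw [← leftUnitor_inv_naturality_assoc]
    _ = (λ_ A'.obj).inv ≫ ((A'.unit ≫ h) ▷ A'.obj) ≫ (A.obj ◁ f) := by
        rw [whisker_exchange]
    _ = ((λ_ A'.obj).inv ≫ (A'.unit ▷ A'.obj)) ≫ (h ▷ A'.obj) ≫ (A.obj ◁ f) := by
        simp [comp_whiskerRight]

lemma IdemAlg.uniq {C : Type*} [Category C] [MonoidalCategory C] [SymmetricCategory C]
    {A A' : IdemAlg C} (f g : A'.obj ⟶ A.obj)
    (hf : A'.unit ≫ f = A.unit) (hg : A'.unit ≫ g = A.unit) : f = g := by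
  have hA := A.idem
  have hA' := A'.idem
  have h1 : (f ⊗ₘ f : A'.obj ⊗ A'.obj ⟶ A.obj ⊗ A.obj) = g ⊗ₘ f := by
    have e1 := IdemAlg.key f f hf
    have e2 := IdemAlg.key f g hg
    have := e1.symm.trans e2
    rw [cancel_epi ((λ_ A'.obj).inv ≫ (A'.unit ▷ A'.obj))] at this
    simpa [MonoidalCategory.tensorHom_def] using this
  have h2 : (g ⊗ₘ g : A'.obj ⊗ A'.obj ⟶ A.obj ⊗ A.obj) = f ⊗ₘ g := by
    have e1 := IdemAlg.key g g hg
    have e2 := IdemAlg.key g f hf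
    have := e1.symm.trans e2
    rw [cancel_epi ((λ_ A'.obj).inv ≫ (A'.unit ▷ A'.obj))] at this
    simpa [MonoidalCategory.tensorHom_def] using this
  have hb : (β_ A'.obj A'.obj).hom ≫ (g ⊗ₘ f) = (f ⊗ₘ g) ≫ (β_ A.obj A.obj).hom :=
    (BraidedCategory.braiding_naturality f g).symm
  have hb2 : (β_ A'.obj A'.obj).hom ≫ (g ⊗ₘ g) = (g ⊗ₘ g) ≫ (β_ A.obj A.obj).hom :=
    (BraidedCategory.braiding_naturality g g).symm
  have h3 : (f ⊗ₘ f : A'.obj ⊗ A'.obj ⟶ A.obj ⊗ A.obj) = f ⊗ₘ g := by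
    rw [h1]
    have : (β_ A'.obj A'.obj).hom ≫ (g ⊗ₘ f) = (β_ A'.obj A'.obj).hom ≫ (g ⊗ₘ g) := by
      rw [hb, hb2, h2]
    rw [cancel_epi] at this
    rw [this, h2]
  have e1 := IdemAlg.key f f hf
  have e2 := IdemAlg.key g f hf
  rw [← MonoidalCategory.tensorHom_def] at e1 e2
  have : f ≫ ((λ_ A.obj).inv ≫ (A.unit ▷ A.obj)) =
      g ≫ ((λ_ A.obj).inv ≫ (A.unit ▷ A.obj)) := by
    rw [e1, e2, h3]
  rwa [cancel_mono] at this

/-- on idempotent commutative algebra objects of a symmetric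
monoidal category, the relation `A ≤ A'` (existence of a unit-compatible map
`A' ⟶ A`) is reflexive and transitive, any unit-compatible map `A' ⟶ A` is
unique, and the relation is antisymmetric up to (unit-compatible) isomorphism. -/
theorem stmt12 {C : Type*} [Category C] [MonoidalCategory C] [SymmetricCategory C] :
    (∀ A : IdemAlg C, A.le A) ∧
    (∀ A B D : IdemAlg C, A.le B → B.le D → A.le D) ∧
    (∀ A A' : IdemAlg C, ∀ f g : A'.obj ⟶ A.obj,
      A'.unit ≫ f = A.unit → A'.unit ≫ g = A.unit → f = g) ∧
    (∀ A A' : IdemAlg C, A.le A' → A'.le A →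
      ∃ e : A.obj ≅ A'.obj, A.unit ≫ e.hom = A'.unit) := by
  refine ⟨fun A => ⟨𝟙 A.obj, Category.comp_id _⟩,
    fun A B D ⟨f, hf⟩ ⟨g, hg⟩ => ⟨g ≫ f, by rw [reassoc_of% hg, hf]⟩,
    fun A A' f g hf hg => IdemAlg.uniq f g hf hg, ?_⟩
  rintro A A' ⟨f, hf⟩ ⟨g, hg⟩
  refine ⟨⟨g, f, ?_, ?_⟩, hg⟩
  · exact IdemAlg.uniq (g ≫ f) (𝟙 A.obj) (by rw [reassoc_of% hg, hf]) (Category.comp_id _)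
  · exact IdemAlg.uniq (f ≫ g) (𝟙 A'.obj) (by rw [reassoc_of% hf, hg]) (Category.comp_id _)
end

section
/- For idempotent commutative algebra objects A, A' in a symmetric monoidal category, A ≤ A' (i.e. there is a unit-compatible map A' → A) if and only if the unit map induces an isomorphism A ⊗ A' ≅ A. -/
open CategoryTheory MonoidalCategory

/-- An idempotent (commutative) algebra object: an object `A` with a unit
`e : 𝟙_C ⟶ A` such that `A ≃ 𝟙_C ⊗ A → A ⊗ A` (via `e ▷ A`) is an isomorphism. -/
def IsIdempotentAlg {C : Type*} [Category C] [MonoidalCategory C]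
    (A : C) (e : 𝟙_ C ⟶ A) : Prop :=
  IsIso ((λ_ A).inv ≫ (e ▷ A))

/-- In a braided category, an idempotent algebra is also idempotent on the right. -/
lemma IsIdempotentAlg.right {C : Type*} [Category C] [MonoidalCategory C]
    [BraidedCategory C] {A : C} {e : 𝟙_ C ⟶ A} (h : IsIdempotentAlg A e) :
    IsIso ((ρ_ A).inv ≫ (A ◁ e)) := by
  have key : (ρ_ A).inv ≫ (A ◁ e) = ((λ_ A).inv ≫ (e ▷ A)) ≫ (β_ A A).hom := by
    rw [Category.assoc, BraidedCategory.braiding_naturality_left]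
    have hb : (β_ (𝟙_ C) A).hom = (λ_ A).hom ≫ (ρ_ A).inv := by
      rw [← braiding_rightUnitor (C := C) A]; simp
    rw [hb]; simp
  rw [key]
  have h' : IsIso ((λ_ A).inv ≫ (e ▷ A)) := h
  infer_instance

/-- for idempotent algebras `A, A'` in a symmetric monoidal
category, `A ≤ A'` (there is a unit-compatible map `A' ⟶ A`) iff the unit of `A'`
induces an isomorphism `A ≃ A ⊗ 𝟙 → A ⊗ A'`. -/
theorem stmt13 {C : Type*} [Category C] [MonoidalCategory C] [SymmetricCategory C]
    (A A' : C) (e : 𝟙_ C ⟶ A) (e' : 𝟙_ C ⟶ A')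
    (hA : IsIdempotentAlg A e) (hA' : IsIdempotentAlg A' e') :
    (∃ f : A' ⟶ A, e' ≫ f = e) ↔ IsIso ((ρ_ A).inv ≫ (A ◁ e')) := by
  constructor
  · rintro ⟨f, hf⟩
    have hrA : IsIso ((ρ_ A).inv ≫ (A ◁ e)) := hA.right
    have hrA' : IsIso ((ρ_ A').inv ≫ (A' ◁ e')) := hA'.right
    have hlA' : IsIso ((λ_ A').inv ≫ (e' ▷ A')) := hA'
    set u : A ⟶ A ⊗ A' := (ρ_ A).inv ≫ (A ◁ e') with hu
    set m : A ⊗ A ⟶ A := inv ((ρ_ A).inv ≫ (A ◁ e)) with hmdef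
    have hm : (A ◁ e) ≫ m = (ρ_ A).hom := by
      have h1 := IsIso.hom_inv_id ((ρ_ A).inv ≫ (A ◁ e))
      rw [Category.assoc, ← hmdef] at h1
      calc (A ◁ e) ≫ m = (ρ_ A).hom ≫ ((ρ_ A).inv ≫ (A ◁ e) ≫ m) := by simp
        _ = (ρ_ A).hom := by rw [h1, Category.comp_id]
    set v : A ⊗ A' ⟶ A := (A ◁ f) ≫ m with hv
    have huv : u ≫ v = 𝟙 A := by
      rw [hu, hv]
      have hcol : (A ◁ e') ≫ (A ◁ f) = A ◁ e := by
        rw [← MonoidalCategory.whiskerLeft_comp, hf]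
      rw [Category.assoc, ← Category.assoc (A ◁ e'), hcol, hm]
      simp
    -- the iso `i : A ⊗ A' ⟶ (A ⊗ A') ⊗ A'` inserting `e'` in the middle
    set i : A ⊗ A' ⟶ (A ⊗ A') ⊗ A' :=
      (A ◁ ((λ_ A').inv ≫ (e' ▷ A'))) ≫ (α_ A A' A').inv with hi
    have hiIso : IsIso i := by
      rw [hi]; infer_instance
    -- key computation : i ≫ ((v ≫ u) ▷ A') = i
    have key : i ≫ ((v ≫ u) ▷ A') = i := by
      rw [hi, hv, hu]
      simp only [MonoidalCategory.comp_whiskerRight, MonoidalCategory.whiskerLeft_comp,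
        Category.assoc]
      rw [← associator_inv_naturality_middle_assoc A f A']
      rw [← MonoidalCategory.whiskerLeft_comp_assoc A (e' ▷ A') (f ▷ A')]
      rw [← MonoidalCategory.comp_whiskerRight e' f, hf]
      rw [associator_inv_naturality_middle_assoc A e A']
      rw [← MonoidalCategory.comp_whiskerRight_assoc (A ◁ e) m, hm]
      rw [associator_inv_naturality_middle A e' A']
      simp
    have hvu1 : (v ≫ u) ▷ A' = 𝟙 ((A ⊗ A') ⊗ A') := by
      calc (v ≫ u) ▷ A' = inv i ≫ (i ≫ ((v ≫ u) ▷ A')) := by simp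
        _ = inv i ≫ i := by rw [key]
        _ = 𝟙 _ := by simp
    -- `u' : A ⊗ A' ⟶ (A ⊗ A') ⊗ A'` inserting e' on the far right, an iso
    set u' : A ⊗ A' ⟶ (A ⊗ A') ⊗ A' := (ρ_ (A ⊗ A')).inv ≫ ((A ⊗ A') ◁ e') with hu'
    have hu'eq : u' = (A ◁ ((ρ_ A').inv ≫ (A' ◁ e'))) ≫ (α_ A A' A').inv := by
      rw [hu', MonoidalCategory.whiskerLeft_comp, Category.assoc,
        associator_inv_naturality_right]
      have hco : (ρ_ (A ⊗ A')).inv = A ◁ (ρ_ A').inv ≫ (α_ A A' (𝟙_ C)).inv := by monoidal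
      rw [hco, Category.assoc]
    have hu'Iso : IsIso u' := by
      rw [hu'eq]; infer_instance
    have hnat : u' ≫ ((v ≫ u) ▷ A') = (v ≫ u) ≫ u' := by
      rw [hu', Category.assoc, whisker_exchange, ← rightUnitor_inv_naturality_assoc]
    have hvu : v ≫ u = 𝟙 (A ⊗ A') := by
      have hcan : (v ≫ u) ≫ u' = 𝟙 _ ≫ u' := by
        rw [← hnat, hvu1, Category.comp_id, Category.id_comp]
      exact (cancel_mono u').mp hcan
    exact ⟨⟨v, huv, hvu⟩⟩
  · intro h
    refine ⟨(λ_ A').inv ≫ (e ▷ A') ≫ inv ((ρ_ A).inv ≫ (A ◁ e')), ?_⟩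
    have hstep : e' ≫ (λ_ A').inv ≫ (e ▷ A') = e ≫ (ρ_ A).inv ≫ (A ◁ e') := by
      rw [leftUnitor_inv_naturality_assoc, whisker_exchange, unitors_inv_equal,
        ← rightUnitor_inv_naturality_assoc]
    rw [reassoc_of% hstep]
    have hcancel : (ρ_ A).inv ≫ (A ◁ e') ≫ inv ((ρ_ A).inv ≫ (A ◁ e')) = 𝟙 A := by
      rw [← Category.assoc]; exact IsIso.hom_inv_id _
    rw [hcancel, Category.comp_id]
end
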